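/- Fix a ∈ [0.9, 1] and ε with 0 < ε < 0.05 and a/2 + 4√ε ≤ 1/2, and let F₂ₐ be the perturbed CDF defined piecewise from G(x) = (3x−1)(x+1)/(3x²) (equal to G(x) − ε + (1/2)(x − a/2 − 2√ε)² for a/2 + √ε < x ≤ a/2 + 3√ε). Let b = a/2 + 2√ε. Then F₂ₐ(b) = G(b) − ε, and b·(1 − (b/(b+1))·F₂ₐ(b)) = 1/3 + ε·b²/(b+1). In particular, the two-buyer revenue at price b under the pair of CDFs (F₁₀, F₂ₐ), where F₁₀(x) = 1 − 1/(x+1) on [0,1/2], exceeds 1/3 by exactly ε·b²/(b+1). -/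
import Mathlib


open Set

/-- The baseline CDF piece `G(x) = (3x−1)(x+1)/(3x²)`. -/
noncomputable def G23 : ℝ → ℝ := fun x => (3*x - 1)*(x + 1)/(3*x^2)

/-- The perturbed CDF `F₂ₐ`, a piecewise modification of `G23` on `[a/2, a/2 + 4√ε]`. -/
noncomputable def F2A (a ε : ℝ) : ℝ → ℝ := fun x =>
  if x ≤ a/2 then G23 x
  else if x ≤ a/2 + Real.sqrt ε then G23 x - (1/2)*(x - a/2)^2
  else if x ≤ a/2 + 3*Real.sqrt ε then G23 x - ε + (1/2)*(x - a/2 - 2*Real.sqrt ε)^2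
  else if x ≤ a/2 + 4*Real.sqrt ε then G23 x - (1/2)*(x - a/2 - 4*Real.sqrt ε)^2
  else G23 x

/-- The first buyer's baseline CDF on `[0, 1/2]`. -/
noncomputable def F₁₀ : ℝ → ℝ := fun x => 1 - 1/(x+1)

theorem stmt4 (a ε : ℝ) (ha : a ∈ Icc (0.9 : ℝ) 1) (hε : 0 < ε) (hε' : ε < 0.05)
    (hfit : a/2 + 4*Real.sqrt ε ≤ 1/2) (b : ℝ) (hb : b = a/2 + 2*Real.sqrt ε) :
    F2A a ε b = G23 b - ε ∧
    b * (1 - (b/(b+1)) * F2A a ε b) = 1/3 + ε * b^2/(b+1) ∧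
    b * (1 - F₁₀ b * F2A a ε b) = 1/3 + ε * b^2/(b+1) := by
  have hs : 0 < Real.sqrt ε := Real.sqrt_pos.mpr hε
  have ha9 : (0.9 : ℝ) ≤ a := ha.1
  have hbpos : 0 < b := by rw [hb]; nlinarith
  have h1 : F2A a ε b = G23 b - ε := by
    unfold F2A
    rw [if_neg (by rw [hb]; linarith), if_neg (by rw [hb]; linarith),
      if_pos (by rw [hb]; linarith)]
    rw [hb]; ring
  have hb1 : (0:ℝ) < b + 1 := by linarith
  refine ⟨h1, ?_, ?_⟩ <;> rw [h1] <;> simp only [G23, F₁₀] <;>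
    field_simp <;> ring
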